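/- Let I ≥ 2, J ≥ 1, 0 < γ < 1, let (θ_1,…,θ_I) and (π_{1,j},…,π_{I,j}) for j = 1,…,J be probability vectors with strictly positive entries, let ω_1,…,ω_J > 0, W₀ > 0, and w₀ᵃˡˡ > W₀. Consider the problem: maximize Σ_{j=1}^J ω_j·Σ_{i=1}^I π_{i,j}·x_{i,j}^γ over x_j ∈ ℝ^I₊ (j = 1,…,J) and y ∈ ℝ^I₊, subject to y + Σ_{j=1}^J x_j = w₀ᵃˡˡ·e and Σ_{i=1}^I θ_i·y_i^γ ≥ W₀^γ. Then an optimal solution (x*, y*) exists, and there exists a Lagrange multiplier η > 0 such that the associated price p*_i = θ_i·(y*_i)^{γ−1} / Σ_{k=1}^I θ_k·(y*_k)^{γ−1} satisfies p*_i = ( η^{1/(1−γ)}·θ_i^{1/(1−γ)} + Σ_{j=1}^J ω_j^{1/(1−γ)}·π_{i,j}^{1/(1−γ)} )^{1−γ} / Σ_{k=1}^I ( η^{1/(1−γ)}·θ_k^{1/(1−γ)} + Σ_{j=1}^J ω_j^{1/(1−γ)}·π_{k,j}^{1/(1−γ)} )^{1−γ} for every i. Thus in a CRRA (power utility) market the limiting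 price is always a weighted power mean of all participants' beliefs, with only the aggregation weights depending on the Pareto weights ω. -/

import Mathlib

lemma stmt13_rpow_tangent {γ : ℝ} (hγ0 : 0 < γ) (hγ1 : γ ≤ 1) {a b : ℝ}
    (ha : 0 ≤ a) (hb : 0 < b) :
    a ^ γ ≤ b ^ γ + γ * b ^ (γ - 1) * (a - b) := by
  have hs : -1 ≤ a / b - 1 := by
    have := div_nonneg ha hb.le; linarith
  have h := rpow_one_add_le_one_add_mul_self hs hγ0.le hγ1
  have h1 : (a / b) ^ γ ≤ 1 + γ * (a / b - 1) := by
    have : (1 : ℝ) + (a / b - 1) = a / b := by ring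
    rwa [this] at h
  have hbγ : 0 < b ^ γ := Real.rpow_pos_of_pos hb _
  have h2 : (a / b) ^ γ = a ^ γ / b ^ γ := Real.div_rpow ha hb.le γ
  have h3 : b ^ (γ - 1) = b ^ γ / b := Real.rpow_sub_one hb.ne' γ
  rw [h2, div_le_iff₀ hbγ] at h1
  calc a ^ γ ≤ (1 + γ * (a / b - 1)) * b ^ γ := h1
    _ = b ^ γ + γ * (b ^ γ / b) * (a - b) := by field_simp
    _ = _ := by rw [← h3]

/-- Existence of the Lagrange multiplier (in the form `t = η^(1/(1-γ))`) making the
market-maker constraint bind. -/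
lemma stmt13_exists_t {I : ℕ} (hI : 0 < I) {γ : ℝ} (hγ0 : 0 < γ) (hγ1 : γ < 1)
    (θ : Fin I → ℝ) (hθ : ∀ i, 0 < θ i) (hθs : ∑ i, θ i = 1)
    (A B : Fin I → ℝ) (hA : ∀ i, 0 < A i) (hB : ∀ i, 0 < B i)
    {W0 w0all : ℝ} (hW0 : 0 < W0) (hw : W0 < w0all) :
    ∃ t : ℝ, 0 < t ∧
      ∑ i, θ i * (w0all * (A i * t) / (A i * t + B i)) ^ γ = W0 ^ γ := by
  have : Nonempty (Fin I) := ⟨⟨0, hI⟩⟩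
  have hw0 : 0 < w0all := hW0.trans hw
  set g : ℝ → ℝ := fun t => ∑ i, θ i * (w0all * (A i * t) / (A i * t + B i)) ^ γ
    with hgdef
  -- denominators are positive for t ≥ 0
  have hden : ∀ t : ℝ, 0 ≤ t → ∀ i, 0 < A i * t + B i := fun t ht i =>
    add_pos_of_nonneg_of_pos (mul_nonneg (hA i).le ht) (hB i)
  -- choose T large
  set T : ℝ := Finset.univ.sup' Finset.univ_nonempty
      (fun i => W0 * B i / (A i * (w0all - W0))) with hTdef
  have hTi : ∀ i, W0 * B i / (A i * (w0all - W0)) ≤ T := fun i =>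
    Finset.le_sup' (fun i => W0 * B i / (A i * (w0all - W0))) (Finset.mem_univ i)
  have hTpos : 0 < T := by
    obtain ⟨i⟩ := ‹Nonempty (Fin I)›
    have : 0 < W0 * B i / (A i * (w0all - W0)) :=
      div_pos (mul_pos hW0 (hB i)) (mul_pos (hA i) (by linarith))
    exact this.trans_le (hTi i)
  -- g is continuous on [0, T]
  have hrpowc : Continuous (fun x : ℝ => x ^ γ) := by
    rw [continuous_iff_continuousAt]
    exact fun x => Real.continuousAt_rpow_const x γ (Or.inr hγ0.le)
  have hgcont : ContinuousOn g (Set.Icc 0 T) := by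
    apply continuousOn_finset_sum
    intro i _
    apply ContinuousOn.mul continuousOn_const
    apply hrpowc.comp_continuousOn
    apply ContinuousOn.div (by fun_prop) (by fun_prop)
    intro t ht
    exact (hden t ht.1 i).ne'
  -- endpoint values
  have hg0 : g 0 = 0 := by
    simp [hgdef, Real.zero_rpow hγ0.ne']
  have hgT : W0 ^ γ ≤ g T := by
    have hyi : ∀ i, W0 ≤ w0all * (A i * T) / (A i * T + B i) := by
      intro i
      rw [le_div_iff₀ (hden T hTpos.le i)]
      have h1 : W0 * B i ≤ T * (A i * (w0all - W0)) := by
        have h0 : 0 < A i * (w0all - W0) := mul_pos (hA i) (by linarith)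
        have h2 := hTi i
        rw [div_le_iff₀ h0] at h2
        exact h2
      nlinarith
    calc W0 ^ γ = ∑ i, θ i * W0 ^ γ := by
          rw [← Finset.sum_mul, hθs, one_mul]
      _ ≤ g T := by
          apply Finset.sum_le_sum
          intro i _
          exact mul_le_mul_of_nonneg_left
            (Real.rpow_le_rpow hW0.le (hyi i) hγ0.le) (hθ i).le
  -- IVT
  have hmem : W0 ^ γ ∈ Set.Icc (g 0) (g T) :=
    ⟨by rw [hg0]; positivity, hgT⟩
  obtain ⟨t, htmem, hgt⟩ := intermediate_value_Icc hTpos.le hgcont hmem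
  refine ⟨t, ?_, hgt⟩
  rcases htmem.1.lt_or_eq with h | h
  · exact h
  · exfalso
    rw [← h, hg0] at hgt
    exact absurd hgt.symm (ne_of_gt (Real.rpow_pos_of_pos hW0 γ))

theorem stmt_13 (I J : ℕ) (hI : 2 ≤ I) (hJ : 1 ≤ J)
    (γ : ℝ) (hγ0 : 0 < γ) (hγ1 : γ < 1)
    (θ : Fin I → ℝ) (hθ : ∀ i, 0 < θ i) (hθs : ∑ i, θ i = 1)
    (π : Fin J → Fin I → ℝ) (hπ : ∀ j i, 0 < π j i) (hπs : ∀ j, ∑ i, π j i = 1)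
    (ω : Fin J → ℝ) (hω : ∀ j, 0 < ω j)
    (W0 w0all : ℝ) (hW0 : 0 < W0) (hw : W0 < w0all) :
    ∃ (xs : Fin J → Fin I → ℝ) (y : Fin I → ℝ),
      -- feasibility
      (∀ j i, 0 ≤ xs j i) ∧ (∀ i, 0 ≤ y i) ∧
      (y + ∑ j, xs j = w0all • (1 : Fin I → ℝ)) ∧
      (W0 ^ γ ≤ ∑ i, θ i * y i ^ γ) ∧
      -- optimality
      (∀ (xs' : Fin J → Fin I → ℝ) (y' : Fin I → ℝ),
        (∀ j i, 0 ≤ xs' j i) → (∀ i, 0 ≤ y' i) →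
        y' + ∑ j, xs' j = w0all • (1 : Fin I → ℝ) →
        W0 ^ γ ≤ ∑ i, θ i * y' i ^ γ →
        (∑ j, ω j * ∑ i, π j i * xs' j i ^ γ) ≤ (∑ j, ω j * ∑ i, π j i * xs j i ^ γ)) ∧
      -- price formula
      ∃ η : ℝ, 0 < η ∧ ∀ i,
        θ i * y i ^ (γ - 1) / (∑ k, θ k * y k ^ (γ - 1)) =
        (η ^ (1 / (1 - γ)) * θ i ^ (1 / (1 - γ)) +
            ∑ j, ω j ^ (1 / (1 - γ)) * π j i ^ (1 / (1 - γ))) ^ (1 - γ) /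
          ∑ k, (η ^ (1 / (1 - γ)) * θ k ^ (1 / (1 - γ)) +
            ∑ j, ω j ^ (1 / (1 - γ)) * π j k ^ (1 / (1 - γ))) ^ (1 - γ) := by
  have h1γ : (0:ℝ) < 1 - γ := by linarith
  have hw0 : 0 < w0all := hW0.trans hw
  set r : ℝ := 1 / (1 - γ) with hrdef
  have hrpos : 0 < r := by positivity
  set A : Fin I → ℝ := fun i => θ i ^ r with hAdef
  set B : Fin I → ℝ := fun i => ∑ j, ω j ^ r * π j i ^ r with hBdef
  have hA : ∀ i, 0 < A i := fun i => Real.rpow_pos_of_pos (hθ i) r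
  have hB : ∀ i, 0 < B i := fun i => Finset.sum_pos
    (fun j _ => mul_pos (Real.rpow_pos_of_pos (hω j) r) (Real.rpow_pos_of_pos (hπ j i) r))
    ⟨⟨0, by omega⟩, Finset.mem_univ _⟩
  obtain ⟨t, htpos, hgt⟩ := stmt13_exists_t (by omega) hγ0 hγ1 θ hθ hθs A B hA hB hW0 hw
  set S : Fin I → ℝ := fun i => A i * t + B i with hSdef
  have hS : ∀ i, 0 < S i := fun i =>
    add_pos_of_nonneg_of_pos (mul_nonneg (hA i).le htpos.le) (hB i)
  set y : Fin I → ℝ := fun i => w0all * (A i * t) / S i with hydef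
  set xs : Fin J → Fin I → ℝ := fun j i => w0all * (ω j ^ r * π j i ^ r) / S i with hxdef
  set η : ℝ := t ^ (1 - γ) with hηdef
  have hη : 0 < η := Real.rpow_pos_of_pos htpos _
  have hypos : ∀ i, 0 < y i := fun i =>
    div_pos (mul_pos hw0 (mul_pos (hA i) htpos)) (hS i)
  have hxpos : ∀ j i, 0 < xs j i := fun j i =>
    div_pos (mul_pos hw0 (mul_pos (Real.rpow_pos_of_pos (hω j) r)
      (Real.rpow_pos_of_pos (hπ j i) r))) (hS i)
  -- basic rpow facts
  have hrinv : ∀ w : ℝ, 0 < w → (w ^ r) ^ (γ - 1) = w⁻¹ := by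
    intro w hw'
    have h1 : (w ^ r) ^ (γ - 1) = w ^ (r * (γ - 1)) := (Real.rpow_mul hw'.le r (γ - 1)).symm
    have h2 : r * (γ - 1) = -1 := by rw [hrdef]; field_simp; ring
    rw [h1, h2, Real.rpow_neg_one]
  have hηr : η ^ r = t := by
    rw [hηdef, ← Real.rpow_mul htpos.le, show (1 - γ) * r = 1 by rw [hrdef]; field_simp,
      Real.rpow_one]
  have hηinv : η⁻¹ = t ^ (γ - 1) := by
    rw [hηdef, ← Real.rpow_neg htpos.le, show -(1 - γ) = γ - 1 by ring]
  -- marginal utility identities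
  have hmarg : ∀ j i, ω j * π j i * xs j i ^ (γ - 1) = (w0all / S i) ^ (γ - 1) := by
    intro j i
    have hx' : xs j i = (ω j * π j i) ^ r * (w0all / S i) := by
      simp only [hxdef]
      rw [Real.mul_rpow (hω j).le (hπ j i).le]
      ring
    rw [hx', Real.mul_rpow (Real.rpow_nonneg (mul_pos (hω j) (hπ j i)).le r)
        (div_pos hw0 (hS i)).le, hrinv _ (mul_pos (hω j) (hπ j i))]
    calc ω j * π j i * ((ω j * π j i)⁻¹ * (w0all / S i) ^ (γ - 1))
        = ((ω j * π j i) * (ω j * π j i)⁻¹) * (w0all / S i) ^ (γ - 1) := by ring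
      _ = (w0all / S i) ^ (γ - 1) := by
          rw [mul_inv_cancel₀ (mul_pos (hω j) (hπ j i)).ne', one_mul]
  have hmargy : ∀ i, η * (θ i * y i ^ (γ - 1)) = (w0all / S i) ^ (γ - 1) := by
    intro i
    have hy' : y i = (θ i * η) ^ r * (w0all / S i) := by
      simp only [hydef, hAdef]
      rw [Real.mul_rpow (hθ i).le hη.le, hηr]
      ring
    rw [hy', Real.mul_rpow (Real.rpow_nonneg (mul_pos (hθ i) hη).le r)
        (div_pos hw0 (hS i)).le, hrinv _ (mul_pos (hθ i) hη)]
    calc η * (θ i * ((θ i * η)⁻¹ * (w0all / S i) ^ (γ - 1)))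
        = ((θ i * η) * (θ i * η)⁻¹) * (w0all / S i) ^ (γ - 1) := by ring
      _ = (w0all / S i) ^ (γ - 1) := by
          rw [mul_inv_cancel₀ (mul_pos (hθ i) hη).ne', one_mul]
  -- the binding constraint
  have hcon : ∑ i, θ i * y i ^ γ = W0 ^ γ := by
    rw [← hgt]
  -- resource constraint
  have hres : ∀ i, y i + ∑ j, xs j i = w0all := by
    intro i
    simp only [hydef, hxdef]
    rw [← Finset.sum_div, ← Finset.mul_sum, ← add_div, ← mul_add,
      div_eq_iff (hS i).ne']
  refine ⟨xs, y, fun j i => (hxpos j i).le, fun i => (hypos i).le, ?_, ?_, ?_, η, hη, ?_⟩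
  · funext i
    simp only [Pi.add_apply, Finset.sum_apply, Pi.smul_apply, Pi.one_apply, smul_eq_mul,
      mul_one]
    exact hres i
  · exact hcon.ge
  · -- optimality
    intro xs' y' hx' hy' hres' hcon'
    have hres'i : ∀ i, y' i + ∑ j, xs' j i = w0all := by
      intro i
      have h := congrFun hres' i
      simpa using h
    have step1 : ∀ j i, ω j * (π j i * xs' j i ^ γ)
        ≤ ω j * (π j i * xs j i ^ γ)
          + γ * (w0all / S i) ^ (γ - 1) * (xs' j i - xs j i) := by
      intro j i
      have h := stmt13_rpow_tangent hγ0 hγ1.le (hx' j i) (hxpos j i)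
      have hm := hmarg j i
      calc ω j * (π j i * xs' j i ^ γ) = (ω j * π j i) * xs' j i ^ γ := by ring
        _ ≤ (ω j * π j i) * (xs j i ^ γ + γ * xs j i ^ (γ - 1) * (xs' j i - xs j i)) :=
            mul_le_mul_of_nonneg_left h (mul_pos (hω j) (hπ j i)).le
        _ = ω j * (π j i * xs j i ^ γ)
            + γ * (ω j * π j i * xs j i ^ (γ - 1)) * (xs' j i - xs j i) := by ring
        _ = _ := by rw [hm]
    have step2 : ∀ i, γ * (w0all / S i) ^ (γ - 1) * (y i - y' i)
        ≤ η * (θ i * y i ^ γ) - η * (θ i * y' i ^ γ) := by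
      intro i
      have h := stmt13_rpow_tangent hγ0 hγ1.le (hy' i) (hypos i)
      have hm := hmargy i
      have h2 : (η * θ i) * y' i ^ γ
          ≤ (η * θ i) * (y i ^ γ + γ * y i ^ (γ - 1) * (y' i - y i)) :=
        mul_le_mul_of_nonneg_left h (mul_pos hη (hθ i)).le
      have h3 : (η * θ i) * (y i ^ γ + γ * y i ^ (γ - 1) * (y' i - y i))
          = η * (θ i * y i ^ γ) + γ * (η * (θ i * y i ^ (γ - 1))) * (y' i - y i) := by ring
      rw [h3, hm] at h2
      linarith
    have hsplit : (∑ j, ω j * ∑ i, π j i * xs' j i ^ γ)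
        ≤ (∑ j, ω j * ∑ i, π j i * xs j i ^ γ)
          + ∑ i, γ * (w0all / S i) ^ (γ - 1) * (y i - y' i) := by
      have h1 : (∑ j, ω j * ∑ i, π j i * xs' j i ^ γ)
          = ∑ j, ∑ i, ω j * (π j i * xs' j i ^ γ) := by simp_rw [Finset.mul_sum]
      have h2 : (∑ j, ω j * ∑ i, π j i * xs j i ^ γ)
          = ∑ j, ∑ i, ω j * (π j i * xs j i ^ γ) := by simp_rw [Finset.mul_sum]
      have key : ∀ i : Fin I, (∑ j, γ * (w0all / S i) ^ (γ - 1) * (xs' j i - xs j i))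
          = γ * (w0all / S i) ^ (γ - 1) * (y i - y' i) := by
        intro i
        rw [← Finset.mul_sum, Finset.sum_sub_distrib]
        have e1 : ∑ j, xs' j i = w0all - y' i := by linarith [hres'i i]
        have e2 : ∑ j, xs j i = w0all - y i := by linarith [hres i]
        rw [e1, e2]
        ring
      rw [h1, h2]
      calc ∑ j, ∑ i, ω j * (π j i * xs' j i ^ γ)
          ≤ ∑ j, ∑ i, (ω j * (π j i * xs j i ^ γ)
              + γ * (w0all / S i) ^ (γ - 1) * (xs' j i - xs j i)) :=
            Finset.sum_le_sum fun j _ => Finset.sum_le_sum fun i _ => step1 j i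
        _ = (∑ j, ∑ i, ω j * (π j i * xs j i ^ γ))
            + ∑ j, ∑ i, γ * (w0all / S i) ^ (γ - 1) * (xs' j i - xs j i) := by
            rw [← Finset.sum_add_distrib]
            exact Finset.sum_congr rfl fun j _ => by rw [← Finset.sum_add_distrib]
        _ = _ := by
            congr 1
            rw [Finset.sum_comm]
            exact Finset.sum_congr rfl fun i _ => key i
    have hR : (∑ i, γ * (w0all / S i) ^ (γ - 1) * (y i - y' i)) ≤ 0 := by
      have h1 : (∑ i, γ * (w0all / S i) ^ (γ - 1) * (y i - y' i))
          ≤ ∑ i, (η * (θ i * y i ^ γ) - η * (θ i * y' i ^ γ)) :=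
        Finset.sum_le_sum fun i _ => step2 i
      have h2 : (∑ i, (η * (θ i * y i ^ γ) - η * (θ i * y' i ^ γ)))
          = η * (∑ i, θ i * y i ^ γ) - η * (∑ i, θ i * y' i ^ γ) := by
        rw [Finset.sum_sub_distrib, ← Finset.mul_sum, ← Finset.mul_sum]
      have h3 : η * W0 ^ γ ≤ η * ∑ i, θ i * y' i ^ γ :=
        mul_le_mul_of_nonneg_left hcon' hη.le
      rw [h2, hcon] at h1
      linarith
    linarith
  · -- price formula
    have hprice : ∀ i, θ i * y i ^ (γ - 1)
        = (t ^ (γ - 1) * w0all ^ (γ - 1)) * S i ^ (1 - γ) := by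
      intro i
      have h1 := hmargy i
      have h2 : θ i * y i ^ (γ - 1) = η⁻¹ * (w0all / S i) ^ (γ - 1) := by
        field_simp
        linarith [h1]
      have h3 : (w0all / S i) ^ (γ - 1) = w0all ^ (γ - 1) * S i ^ (1 - γ) := by
        rw [Real.div_rpow hw0.le (hS i).le, div_eq_mul_inv,
          ← Real.rpow_neg (hS i).le, show -(γ - 1) = 1 - γ by ring]
      rw [h2, h3, hηinv]
      ring
    have hSeq : ∀ i, η ^ r * θ i ^ r + ∑ j, ω j ^ r * π j i ^ r = S i := by
      intro i
      simp only [hSdef, hBdef, hAdef, hηr]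
      ring
    intro i
    have hCpos : (0:ℝ) < t ^ (γ - 1) * w0all ^ (γ - 1) :=
      mul_pos (Real.rpow_pos_of_pos htpos _) (Real.rpow_pos_of_pos hw0 _)
    simp only [hSeq, hprice]
    rw [← Finset.mul_sum, mul_div_mul_left _ _ hCpos.ne']
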